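/- Let P ⊂ A* be a prefix code and let v ∈ ends(P) be an infinite word with some prefix in P. Then there exists a prefix code P(−v) such that ends(P(−v)) = ends(P) \ {v} and P(−v) ≡_end P. Concretely, if v₁…v_{i₀} ∈ P is a prefix of v, one can take P(−v) = (P \ {v₁…v_{i₀}}) ∪ { v₁…v_j·(complement of v_{j+1}) : j ≥ i₀ }. -/

import Mathlib

open List

/-- Finite words over the alphabet A = {0,1}. -/
abbrev W := List Bool

/-- Prefix-comparability of words. -/
def pc (x y : W) : Prop := x <+: y ∨ y <+: x

/-- `RI L` is the right ideal `L·A*` generated by `L`. -/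
def RI (L : Set W) : Set W := {y | ∃ x ∈ L, ∃ w : W, y = x ++ w}

/-- `R` is a right ideal of `A*`. -/
def isRightIdeal (R : Set W) : Prop := ∀ x ∈ R, ∀ w : W, x ++ w ∈ R

/-- End-equivalence of sets: `L₁A*` and `L₂A*` intersect the same right ideals. -/
def endEquiv (L₁ L₂ : Set W) : Prop :=
  ∀ R : Set W, isRightIdeal R → ((R ∩ RI L₁).Nonempty ↔ (R ∩ RI L₂).Nonempty)

/-- A prefix code: no two distinct elements are prefix-comparable. -/
def isPrefixCode (P : Set W) : Prop := ∀ x ∈ P, ∀ y ∈ P, x <+: y → x = y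

/-- Right-ideal morphism, as a partial function `A* → A*` (using `Option`):
    whenever `f x = some y`, also `f (x++w) = some (y++w)`.
    (This forces the domain to be a right ideal.) -/
def isRIM (f : W → Option W) : Prop :=
  ∀ x y : W, f x = some y → ∀ w : W, f (x ++ w) = some (y ++ w)

/-- Domain of a partial function. -/
def Dom (f : W → Option W) : Set W := {x | f x ≠ none}

/-- Image of a partial function. -/
def Im (f : W → Option W) : Set W := {y | ∃ x, f x = some y}

/-- The prefix code of minimal elements generating a right ideal `S`. -/
def prefC (S : Set W) : Set W := {x | x ∈ S ∧ ∀ p : W, p <+: x → p ≠ x → p ∉ S}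

/-- Domain code of a right-ideal morphism. -/
def domC (f : W → Option W) : Set W := prefC (Dom f)

/-- Image code of a right-ideal morphism. -/
def imC (f : W → Option W) : Set W := prefC (Im f)

/-- Image of a set under a partial function. -/
def fImage (f : W → Option W) (L : Set W) : Set W := {y | ∃ x ∈ L, f x = some y}

/-- Preimage of a set under a partial function. -/
def fPreim (f : W → Option W) (S : Set W) : Set W := {x | ∃ y ∈ S, f x = some y}

/-- End-equivalence of right-ideal morphisms: the domains are end-equivalent,
    and the functions agree on the common domain. -/
def endEquivF (f g : W → Option W) : Prop :=
  endEquiv (Dom f) (Dom g) ∧ ∀ x, x ∈ Dom f → x ∈ Dom g → f x = g x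

/-- Bounded end-equivalence of sets. -/
def bdSets (P Q : Set W) : Prop :=
  endEquiv P Q ∧ ∃ β : ℕ → ℕ, ∀ x₁ ∈ P, ∀ x₂ ∈ Q, pc x₁ x₂ →
    x₁.length ≤ β x₂.length ∧ x₂.length ≤ β x₁.length

/-- Bounded end-equivalence of right-ideal morphisms. -/
def bdEquivF (f g : W → Option W) : Prop :=
  bdSets (domC f) (domC g) ∧ endEquivF f g

/-- Concatenation of a finite word with an infinite word. -/
def wcat (x : W) (w : ℕ → Bool) : ℕ → Bool :=
  fun i => if h : i < x.length then x.get ⟨i, h⟩ else w (i - x.length)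

/-- `ends L = L·A^ω`: the infinite words having a prefix in `L`. -/
def ends (L : Set W) : Set (ℕ → Bool) := {u | ∃ x ∈ L, ∃ w : ℕ → Bool, u = wcat x w}

/-- Composition of partial functions: `pcomp f g = f ∘ g` (apply `g` first). -/
def pcomp (f g : W → Option W) : W → Option W := fun x => (g x).bind f

/-- `sub f g`: the partial function `g` extends the partial function `f`. -/
def sub (f g : W → Option W) : Prop := ∀ x y : W, f x = some y → g x = some y


namespace Puncture

/-- Prefix of `v` of length `n`, as a finite word. -/
def vp (v : ℕ → Bool) (n : ℕ) : W := (List.range n).map v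

@[simp] lemma vp_length (v : ℕ → Bool) (n : ℕ) : (vp v n).length = n := by simp [vp]

lemma vp_getElem (v : ℕ → Bool) (n i : ℕ) (h : i < (vp v n).length) : (vp v n)[i] = v i := by
  simp [vp]

lemma vp_prefix (v : ℕ → Bool) {m n : ℕ} (h : m ≤ n) : vp v m <+: vp v n := by
  obtain ⟨k, rfl⟩ := Nat.exists_eq_add_of_le h
  unfold vp
  rw [List.range_add, List.map_append]
  exact List.prefix_append _ _

/-- Prefix of `v` of length `j` followed by the flipped `j`-th bit. -/
def zj (v : ℕ → Bool) (j : ℕ) : W := vp v j ++ [!(v j)]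

@[simp] lemma zj_length (v : ℕ → Bool) (j : ℕ) : (zj v j).length = j + 1 := by simp [zj]

lemma zj_getElem_lt (v : ℕ → Bool) {j i : ℕ} (h : i < j) (h' : i < (zj v j).length) :
    (zj v j)[i] = v i := by
  simp [zj, List.getElem_append, h, vp_getElem]

lemma zj_getElem_last (v : ℕ → Bool) {j : ℕ} (h' : j < (zj v j).length) :
    (zj v j)[j] = !(v j) := by
  simp [zj, List.getElem_append]

lemma bool_flip {a b : Bool} (h : a ≠ b) : a = !b := by cases a <;> cases b <;> simp_all

lemma prefix_of_getElem {y s : W} (hl : y.length ≤ s.length)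
    (h : ∀ i (h1 : i < y.length), y[i] = s[i]'(lt_of_lt_of_le h1 hl)) : y <+: s := by
  rw [List.prefix_iff_eq_take]
  refine List.ext_getElem (by simp [hl]) ?_
  intro n h1 h2
  rw [List.getElem_take]
  exact h n h1

lemma ends_agree {u : ℕ → Bool} {x : W} :
    (∃ w, u = wcat x w) ↔ ∀ i (h : i < x.length), u i = x[i] := by
  constructor
  · rintro ⟨w, rfl⟩ i h
    simp [wcat, h]
  · intro h
    refine ⟨fun i => u (i + x.length), ?_⟩
    funext i
    simp only [wcat]
    split
    · rw [h i ‹_›]; simp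
    · congr 1; omega

lemma mem_ends {u : ℕ → Bool} {L : Set W} :
    u ∈ ends L ↔ ∃ x ∈ L, ∀ i (h : i < x.length), u i = x[i] := by
  constructor
  · rintro ⟨x, hx, w, rfl⟩
    exact ⟨x, hx, ends_agree.mp ⟨w, rfl⟩⟩
  · rintro ⟨x, hx, h⟩
    obtain ⟨w, hw⟩ := ends_agree.mpr h
    exact ⟨x, hx, w, hw⟩

/-- Key lemma: appending the flipped next-bit-of-`v` to any word `r` that agrees with `v`
on its first `n` positions produces a word with a prefix of the form `zj v j`, `n ≤ j`. -/
lemma key (v : ℕ → Bool) (r : W) (n : ℕ) (hn : n ≤ r.length)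
    (hagree : ∀ i (h : i < r.length), i < n → r[i] = v i) :
    ∃ j, n ≤ j ∧ zj v j <+: r ++ [!(v r.length)] := by
  classical
  set u : ℕ → Bool := fun i => if h : i < r.length then r[i] else !(v r.length) with hu
  have hne : ∃ i, u i ≠ v i := by
    refine ⟨r.length, ?_⟩
    simp only [hu, lt_irrefl, dif_neg (lt_irrefl r.length)]
    exact Bool.not_ne_self _
  refine ⟨Nat.find hne, ?_, ?_⟩
  · by_contra hc
    push_neg at hc
    refine Nat.find_spec hne ?_
    have h1 : Nat.find hne < r.length := lt_of_lt_of_le hc hn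
    simp only [hu, dif_pos h1]
    exact hagree _ h1 hc
  · have hjle : Nat.find hne ≤ r.length := by
      refine Nat.find_min' hne ?_
      simp only [hu, dif_neg (lt_irrefl r.length)]
      exact Bool.not_ne_self _
    have hus : ∀ i (h : i < (r ++ [!(v r.length)]).length), u i = (r ++ [!(v r.length)])[i] := by
      intro i h
      simp only [List.length_append, List.length_singleton] at h
      by_cases h2 : i < r.length
      · simp only [hu, dif_pos h2]
        rw [List.getElem_append_left h2]
      · have h3 : i = r.length := by omega
        subst h3
        simp only [hu, dif_neg (lt_irrefl r.length)]
        rw [List.getElem_append_right (le_refl _)]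
        simp
    refine prefix_of_getElem (by simpa using Nat.succ_le_succ hjle) ?_
    intro i h1
    simp only [zj_length] at h1
    have his : i < (r ++ [!(v r.length)]).length := by simp; omega
    rcases lt_or_eq_of_le (Nat.lt_succ_iff.mp h1) with hlt | rfl
    · rw [zj_getElem_lt v hlt, ← hus i his]
      exact (not_not.mp (Nat.find_min hne hlt)).symm
    · rw [zj_getElem_last, ← hus _ his]
      exact (bool_flip (Nat.find_spec hne)).symm

end Puncture

/-- removing one end from a prefix code, preserving end-equivalence. -/
theorem puncture_prefixCode (P : Set W) (hP : isPrefixCode P)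
    (v : ℕ → Bool) (hv : v ∈ ends P) :
    ∃ Q : Set W, isPrefixCode Q ∧ ends Q = ends P \ {v} ∧ endEquiv Q P := by
  classical
  obtain ⟨x, hxP, w0, hvw⟩ := hv
  have hxv : ∀ i (h : i < x.length), v i = x[i] := Puncture.ends_agree.mp ⟨w0, hvw⟩
  set i₀ := x.length with hi₀
  have hxvp : x = Puncture.vp v i₀ := by
    refine List.ext_getElem (by simp [hi₀]) ?_
    intro n h1 h2
    rw [Puncture.vp_getElem, ← hxv n h1]
  set Q : Set W := (P \ {x}) ∪ {z | ∃ j, i₀ ≤ j ∧ z = Puncture.zj v j} with hQ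
  -- x is a prefix of every zj
  have hxz : ∀ j, i₀ ≤ j → x <+: Puncture.zj v j := by
    intro j hj
    rw [hxvp]
    exact (Puncture.vp_prefix v hj).trans (List.prefix_append _ _)
  -- the only element of P that is a prefix of v is x
  have honly : ∀ y ∈ P, ∀ N, y <+: Puncture.vp v N → y = x := by
    intro y hy N hyN
    have h1 : y <+: Puncture.vp v (max N i₀) := hyN.trans (Puncture.vp_prefix v (le_max_left _ _))
    have h2 : x <+: Puncture.vp v (max N i₀) := by
      rw [hxvp]; exact Puncture.vp_prefix v (le_max_right _ _)
    rcases List.prefix_or_prefix_of_prefix h1 h2 with h | h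
    · exact hP y hy x hxP h
    · exact (hP x hxP y hy h).symm
  refine ⟨Q, ?_, ?_, ?_⟩
  · -- prefix code
    rintro y (⟨hyP, hyx⟩ | ⟨j, hj, rfl⟩) z (⟨hzP, hzx⟩ | ⟨k, hk, rfl⟩) hpre
    · exact hP y hyP z hzP hpre
    · -- y ∈ P \ {x}, z = zj v k
      exfalso
      have hlen : y.length ≤ k + 1 := by simpa using hpre.length_le
      rcases lt_or_eq_of_le hlen with hlt | heq
      · have hle : y.length ≤ k := by omega
        have hpre2 : y <+: Puncture.vp v k := by
          refine Puncture.prefix_of_getElem (by simpa using hle) ?_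
          intro i h1
          rw [Puncture.vp_getElem]
          have h2 := hpre.getElem (i := i) h1
          rwa [Puncture.zj_getElem_lt v (by omega)] at h2
        exact hyx (honly y hyP k hpre2)
      · have heq2 : y = Puncture.zj v k := hpre.eq_of_length (by simpa using heq)
        have hxy : x = y := hP x hxP y hyP (heq2 ▸ hxz k hk)
        have : y.length = i₀ := by rw [← hxy]
        simp only [heq2, Puncture.zj_length] at this
        omega
    · -- y = zj v j, z ∈ P \ {x}
      exact absurd ((hP x hxP z hzP ((hxz j hj).trans hpre)).symm) hzx
    · -- y = zj v j, z = zj v k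
      have hjk : j ≤ k := by
        have := hpre.length_le
        simp only [Puncture.zj_length] at this
        omega
      rcases eq_or_lt_of_le hjk with rfl | hlt
      · rfl
      · exfalso
        have h1 : (Puncture.zj v j)[j]'(by simp) = (Puncture.zj v k)[j]'(by simp; omega) :=
          hpre.getElem _
        rw [Puncture.zj_getElem_last, Puncture.zj_getElem_lt v hlt] at h1
        exact Bool.not_ne_self (v j) h1
  · -- ends Q = ends P \ {v}
    ext u
    simp only [Set.mem_diff, Set.mem_singleton_iff]
    constructor
    · intro hu
      obtain ⟨q, hq, hag⟩ := Puncture.mem_ends.mp hu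
      rcases hq with ⟨hqP, hqx⟩ | ⟨j, hj, rfl⟩
      · refine ⟨Puncture.mem_ends.mpr ⟨q, hqP, hag⟩, ?_⟩
        rintro rfl
        refine hqx (honly q hqP q.length ?_)
        refine Puncture.prefix_of_getElem (by simp) ?_
        intro i h1
        rw [Puncture.vp_getElem, ← hag i h1]
      · constructor
        · refine Puncture.mem_ends.mpr ⟨x, hxP, ?_⟩
          intro i h
          rw [hag i (by simp; omega), (hxz j hj).getElem h]
        · intro huv
          have h1 := hag j (by simp)
          rw [Puncture.zj_getElem_last] at h1
          rw [huv] at h1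
          exact Bool.not_ne_self (v j) h1.symm
    · rintro ⟨hu, huv⟩
      obtain ⟨y, hyP, hag⟩ := Puncture.mem_ends.mp hu
      by_cases hyx : y = x
      · subst hyx
        have hne : ∃ j, u j ≠ v j := by
          by_contra hc
          push_neg at hc
          exact huv (funext hc)
        have hjspec : u (Nat.find hne) ≠ v (Nat.find hne) := Nat.find_spec hne
        have hjmin : ∀ i < Nat.find hne, u i = v i :=
          fun i hi => not_not.mp (Nat.find_min hne hi)
        have hji : i₀ ≤ Nat.find hne := by
          by_contra hc
          push_neg at hc
          exact hjspec (by rw [hag _ hc, ← hxv _ hc])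
        refine Puncture.mem_ends.mpr ⟨Puncture.zj v (Nat.find hne),
          Or.inr ⟨Nat.find hne, hji, rfl⟩, ?_⟩
        intro i h
        simp only [Puncture.zj_length] at h
        rcases lt_or_eq_of_le (Nat.lt_succ_iff.mp h) with hlt | rfl
        · rw [Puncture.zj_getElem_lt v hlt]
          exact hjmin i hlt
        · rw [Puncture.zj_getElem_last]
          exact Puncture.bool_flip hjspec
      · exact Puncture.mem_ends.mpr ⟨y, Or.inl ⟨hyP, hyx⟩, hag⟩
  · -- endEquiv Q P
    intro R hR
    constructor
    · rintro ⟨r, hrR, q, hq, t, rfl⟩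
      rcases hq with ⟨hqP, _⟩ | ⟨j, hj, rfl⟩
      · exact ⟨q ++ t, hrR, q, hqP, t, rfl⟩
      · obtain ⟨s, hs⟩ := hxz j hj
        exact ⟨_, hrR, x, hxP, s ++ t, by rw [← List.append_assoc, hs]⟩
    · rintro ⟨r, hrR, y, hyP, t, rfl⟩
      by_cases hyx : y = x
      · subst hyx
        have hagree : ∀ i (h : i < (y ++ t).length), i < i₀ → (y ++ t)[i] = v i := by
          intro i h hi
          rw [List.getElem_append_left hi, ← hxv i hi]
        obtain ⟨j, hj, hzpre⟩ := Puncture.key v (y ++ t) i₀ (by simp [hi₀]) hagree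
        obtain ⟨t2, ht2⟩ := hzpre
        refine ⟨(y ++ t) ++ [!(v (y ++ t).length)], hR _ hrR _,
          Puncture.zj v j, Or.inr ⟨j, hj, rfl⟩, t2, ht2.symm⟩
      · exact ⟨y ++ t, hrR, y, Or.inl ⟨hyP, hyx⟩, t, rfl⟩
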